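/- Let σ(t) = 1/(1 + exp(−t)), let N > 0, γ > 0, δ > 0, and ε ∈ (0,1). Let x : ℝ → ℝ be differentiable with x(0) = x₀ ∈ [0,1] and x′(t) = exp(−Nδ)·(σ(γN) − x(t)) for all t. If T ≥ exp(Nδ)·log(1/ε), then |x(T) − σ(γN)| ≤ ε. -/

import Mathlib

/-- The logistic sigmoid function σ(t) = 1/(1 + exp(−t)). -/
noncomputable def logistic (t : ℝ) : ℝ := 1 / (1 + Real.exp (-t))

/-- Theorem 2(a), sufficiency: for the cold-inference dynamics
x′ = exp(−Nδ)·(σ(γN) − x) started at x₀ ∈ [0,1], time T ≥ exp(Nδ)·log(1/ε)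
suffices to bring the TVD |x(T) − σ(γN)| below ε. -/
theorem stmt_3 (N γ δ ε x₀ T : ℝ)
    (hN : 0 < N) (hγ : 0 < γ) (hδ : 0 < δ) (hε : ε ∈ Set.Ioo (0:ℝ) 1)
    (x : ℝ → ℝ) (hdiff : Differentiable ℝ x)
    (hx0 : x 0 = x₀) (hx₀ : x₀ ∈ Set.Icc (0:ℝ) 1)
    (hode : ∀ t : ℝ, deriv x t = Real.exp (-(N * δ)) * (logistic (γ * N) - x t))
    (hT : T ≥ Real.exp (N * δ) * Real.log (1 / ε)) :
    |x T - logistic (γ * N)| ≤ ε := by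
  obtain ⟨hε0, hε1⟩ := hε
  set k := Real.exp (-(N * δ)) with hk
  set c := logistic (γ * N) with hc
  have hkpos : 0 < k := Real.exp_pos _
  -- g t = (x t - c) * exp (k t) is constant
  set g : ℝ → ℝ := fun t => (x t - c) * Real.exp (k * t) with hg
  have hgdiff : Differentiable ℝ g := by
    apply Differentiable.mul
    · exact hdiff.sub_const c
    · exact (Real.differentiable_exp.comp (differentiable_id.const_mul k))
  have hgderiv : ∀ t, deriv g t = 0 := by
    intro t
    have hx : HasDerivAt x (deriv x t) t := (hdiff t).hasDerivAt
    have he : HasDerivAt (fun t => Real.exp (k * t)) (k * Real.exp (k * t)) t := by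
      have h0 : HasDerivAt (fun t : ℝ => k * t) k t := by
        simpa using (hasDerivAt_id t).const_mul k
      simpa [mul_comm] using h0.exp
    have h1 : HasDerivAt g (deriv x t * Real.exp (k * t) + (x t - c) * (k * Real.exp (k * t))) t :=
      (hx.sub_const c).mul he
    have := h1.deriv
    rw [this, hode t]
    ring
  have hconst : ∀ t, g t = g 0 := fun t =>
    is_const_of_deriv_eq_zero hgdiff hgderiv t 0
  have hgT := hconst T
  have hg0 : g 0 = x₀ - c := by simp [hg, hx0]
  -- so x T - c = (x₀ - c) * exp (-(k*T))
  have hxT : x T - c = (x₀ - c) * Real.exp (-(k * T)) := by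
    have hne : Real.exp (k * T) ≠ 0 := (Real.exp_pos _).ne'
    have : (x T - c) * Real.exp (k * T) = x₀ - c := by
      simpa [hg, hx0] using hgT
    field_simp [Real.exp_neg]
    rw [← this, mul_assoc, ← Real.exp_add]
    simp
  -- bound |x₀ - c| ≤ 1
  have hcpos : 0 < c := by
    have := Real.exp_pos (-(γ * N))
    have h1 : 0 < 1 + Real.exp (-(γ * N)) := by linarith
    exact div_pos one_pos h1
  have hc1 : c < 1 := by
    have he := Real.exp_pos (-(γ * N))
    have h1 : 0 < 1 + Real.exp (-(γ * N)) := by linarith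
    rw [hc, logistic, div_lt_one h1]
    linarith
  have habs : |x₀ - c| ≤ 1 := by
    rw [abs_le]
    constructor <;> [linarith [hx₀.1]; linarith [hx₀.2]]
  -- bound exp(-(k*T)) ≤ ε
  have hlog : 0 < Real.log (1 / ε) := Real.log_pos (by rw [one_div]; exact (one_lt_inv₀ hε0).mpr hε1)
  have hkT : Real.log (1 / ε) ≤ k * T := by
    have := mul_le_mul_of_nonneg_left hT hkpos.le
    calc Real.log (1 / ε) = k * (Real.exp (N * δ) * Real.log (1 / ε)) := by
          rw [hk, ← mul_assoc, ← Real.exp_add]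
          simp
      _ ≤ k * T := this
  have hexp : Real.exp (-(k * T)) ≤ ε := by
    have h1 : Real.exp (-(k * T)) ≤ Real.exp (-Real.log (1 / ε)) :=
      Real.exp_le_exp.mpr (by linarith)
    have h2 : Real.exp (-Real.log (1 / ε)) = ε := by
      rw [Real.exp_neg, Real.exp_log (by positivity), one_div, inv_inv]
    linarith
  calc |x T - c| = |x₀ - c| * Real.exp (-(k * T)) := by
        rw [hxT, abs_mul, abs_of_pos (Real.exp_pos _)]
    _ ≤ 1 * ε := mul_le_mul habs hexp (Real.exp_pos _).le zero_le_one
    _ = ε := one_mul ε
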